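/- Let $\gamma \ne 0$, let $R$ be a random variable satisfying $0 < E[|R|^{1/\gamma}] < \infty$ with $R \ge 0$ if $\gamma>0$ and $R<0$ if $\gamma<0$, and let $\sigma > 0$. Then for all $x \ge 0$ with $\sigma + \gamma x > 0$, $\frac{\int_0^\infty \Pr[R/t^\gamma - \sigma/\gamma > x]\,dt}{\int_0^\infty \Pr[R/t^\gamma - \sigma/\gamma > 0]\,dt} = \left(1 + \frac{\gamma}{\sigma}x\right)^{-1/\gamma}.$ -/

import Mathlib

open MeasureTheory Real Set

lemma gp_exceed_integral
    {Ω : Type*} [MeasurableSpace Ω] (P : Measure Ω) [IsProbabilityMeasure P]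
    (γ : ℝ) (hγ : γ ≠ 0)
    (R : Ω → ℝ)
    (hsign : ∀ ω, if 0 < γ then 0 ≤ R ω else R ω < 0)
    (hmom_int : Integrable (fun ω => |R ω| ^ (1 / γ)) P)
    (b : ℝ) (hb : 0 < γ * b) :
    (∫ t in Ioi (0 : ℝ), (P {ω | R ω > t ^ γ * b}).toReal)
      = |b| ^ (-(1 / γ)) * ∫ ω, |R ω| ^ (1 / γ) ∂P := by
  set g : Ω → ℝ := fun ω => |R ω| ^ (1 / γ) * |b| ^ (-(1 / γ)) with hg
  have hb0 : b ≠ 0 := by rintro rfl; simp at hb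
  have habs : (0:ℝ) < |b| := abs_pos.mpr hb0
  have hgint : Integrable g P := hmom_int.mul_const _
  have hgnn : 0 ≤ᵐ[P] g := Filter.Eventually.of_forall fun ω => by
    apply mul_nonneg (rpow_nonneg (abs_nonneg _) _) (rpow_nonneg (abs_pos.mpr hb0).le _)
  have key : ∀ t ∈ Ioi (0:ℝ), ∀ ω, (R ω > t ^ γ * b ↔ t < g ω) := by
    intro t ht ω
    have ht0 : (0:ℝ) < t := ht
    have hgω : g ω = (R ω / b) ^ (1 / γ) := by
      have hRb : R ω / b = |R ω| / |b| := by
        rcases lt_or_gt_of_ne hγ with hneg | hpos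
        · have hRω := hsign ω
          rw [if_neg (not_lt.mpr hneg.le)] at hRω
          have hbneg : b < 0 := by nlinarith
          rw [abs_of_neg hRω, abs_of_neg hbneg, neg_div_neg_eq]
        · have hRω := hsign ω
          rw [if_pos hpos] at hRω
          have hbpos : 0 < b := by nlinarith
          rw [abs_of_nonneg hRω, abs_of_pos hbpos]
      rw [hRb, div_rpow (abs_nonneg _) habs.le, hg, rpow_neg habs.le]
      simp [div_eq_mul_inv]
    rw [hgω, one_div]
    rcases lt_or_gt_of_ne hγ with hneg | hpos
    · have hRω := hsign ω
      rw [if_neg (not_lt.mpr hneg.le)] at hRω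
      have hbneg : b < 0 := by nlinarith
      have hRb : 0 < R ω / b := div_pos_of_neg_of_neg hRω hbneg
      rw [Real.lt_rpow_inv_iff_of_neg ht0 hRb hneg, div_lt_iff_of_neg hbneg,
        gt_iff_lt, mul_comm]
    · have hRω := hsign ω
      rw [if_pos hpos] at hRω
      have hbpos : 0 < b := by nlinarith
      have hRb : 0 ≤ R ω / b := div_nonneg hRω hbpos.le
      rw [Real.lt_rpow_inv_iff_of_pos ht0.le hRb hpos, lt_div_iff₀ hbpos,
        gt_iff_lt, mul_comm]
  have h1 : (∫ t in Ioi (0 : ℝ), (P {ω | R ω > t ^ γ * b}).toReal)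
      = ∫ t in Ioi (0 : ℝ), (P {ω | t < g ω}).toReal := by
    apply setIntegral_congr_fun measurableSet_Ioi
    intro t ht
    simp only
    congr 1
    exact congrArg P (Set.ext fun ω => key t ht ω)
  rw [h1]; simp only [← measureReal_def]; rw [← hgint.integral_eq_integral_meas_lt hgnn, hg,
    integral_mul_const, mul_comm]

/-- Core computation of Proposition 6.2: the ratio of exceedance integrals of
`R/t^γ - σ/γ` over levels `x` and `0` equals `(1 + γx/σ)^{-1/γ}`. -/
theorem gp_sum_conditional_pareto
    {Ω : Type*} [MeasurableSpace Ω] (P : Measure Ω) [IsProbabilityMeasure P]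
    (γ σ : ℝ) (hγ : γ ≠ 0) (hσ : 0 < σ)
    (R : Ω → ℝ) (hR : Measurable R)
    (hsign : ∀ ω, if 0 < γ then 0 ≤ R ω else R ω < 0)
    (hmom_pos : 0 < ∫ ω, |R ω| ^ (1 / γ) ∂P)
    (hmom_int : Integrable (fun ω => |R ω| ^ (1 / γ)) P)
    (x : ℝ) (hx : 0 ≤ x) (hσx : 0 < σ + γ * x) :
    (∫ t in Ioi (0 : ℝ), (P {ω | R ω / t ^ γ - σ / γ > x}).toReal)
        / (∫ t in Ioi (0 : ℝ), (P {ω | R ω / t ^ γ - σ / γ > 0}).toReal)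
      = (1 + γ / σ * x) ^ (-(1 / γ)) := by
  have hevent : ∀ y : ℝ, ∀ t ∈ Ioi (0:ℝ),
      {ω | R ω / t ^ γ - σ / γ > y} = {ω | R ω > t ^ γ * (y + σ / γ)} := by
    intro y t ht
    have htγ : (0:ℝ) < t ^ γ := rpow_pos_of_pos ht γ
    ext ω
    simp only [mem_setOf_eq, gt_iff_lt]
    rw [lt_sub_iff_add_lt, lt_div_iff₀ htγ, mul_comm]
  have hnum : (∫ t in Ioi (0 : ℝ), (P {ω | R ω / t ^ γ - σ / γ > x}).toReal)
      = |x + σ / γ| ^ (-(1 / γ)) * ∫ ω, |R ω| ^ (1 / γ) ∂P := by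
    rw [setIntegral_congr_fun measurableSet_Ioi (fun t ht => by rw [hevent x t ht])]
    apply gp_exceed_integral P γ hγ R hsign hmom_int
    have : γ * (x + σ / γ) = γ * x + σ := by field_simp
    rw [this]; linarith
  have hden : (∫ t in Ioi (0 : ℝ), (P {ω | R ω / t ^ γ - σ / γ > 0}).toReal)
      = |0 + σ / γ| ^ (-(1 / γ)) * ∫ ω, |R ω| ^ (1 / γ) ∂P := by
    rw [setIntegral_congr_fun measurableSet_Ioi (fun t ht => by rw [hevent 0 t ht])]
    apply gp_exceed_integral P γ hγ R hsign hmom_int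
    have : γ * (0 + σ / γ) = σ := by field_simp; ring
    rw [this]; exact hσ
  rw [hnum, hden]
  rw [mul_div_mul_right _ _ (ne_of_gt hmom_pos)]
  rw [← div_rpow (abs_nonneg _) (abs_nonneg _)]
  congr 1
  rw [← abs_div, abs_of_pos]
  · field_simp
    linear_combination (x * γ + σ) * mul_inv_cancel₀ hσ.ne'
  · rw [zero_add]
    have hσγ : σ / γ ≠ 0 := div_ne_zero hσ.ne' hγ
    rw [div_pos_iff]
    rcases lt_or_gt_of_ne hγ with hneg | hpos
    · right
      constructor
      · have : x + σ / γ = (γ * x + σ) / γ := by field_simp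
        rw [this]
        exact div_neg_of_pos_of_neg (by linarith) hneg
      · exact div_neg_of_pos_of_neg hσ hneg
    · left
      exact ⟨by positivity, by positivity⟩
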